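/- Let k be an algebraically closed field and let E and K be field extensions of k. Then E ⊗_k K is an integral domain. -/

import Mathlib

open scoped TensorProduct

section Aux

variable {k E K A ι : Type*}

/-- For a maximal ideal `m` of a finite type algebra `A` over an algebraically closed
field `k`, there is a `k`-algebra hom `A →ₐ[k] k` with kernel `m` (Nullstellensatz). -/
lemma aux_hom [Field k] [IsAlgClosed k] [CommRing A] [Algebra k A]
    [Algebra.FiniteType k A] (m : Ideal A) [hm : m.IsMaximal] :
    ∃ φ : A →ₐ[k] k, ∀ a, φ a = 0 ↔ a ∈ m := by
  letI : Field (A ⧸ m) := Ideal.Quotient.field m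
  haveI : Algebra.FiniteType k (A ⧸ m) :=
    Algebra.FiniteType.of_surjective (Ideal.Quotient.mkₐ k m)
      (Ideal.Quotient.mkₐ_surjective k m)
  haveI : Module.Finite k (A ⧸ m) := finite_of_finite_type_of_isJacobsonRing k (A ⧸ m)
  haveI : Algebra.IsIntegral k (A ⧸ m) := Algebra.IsIntegral.of_finite k (A ⧸ m)
  have hbij : Function.Bijective (algebraMap k (A ⧸ m)) :=
    ⟨(algebraMap k (A ⧸ m)).injective, IsAlgClosed.algebraMap_bijective_of_isIntegral.2⟩
  let e : k ≃+* (A ⧸ m) := RingEquiv.ofBijective _ hbij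
  refine ⟨⟨(e.symm.toRingHom.comp (Ideal.Quotient.mk m) : A →+* k), fun r => ?_⟩, fun a => ?_⟩
  · show e.symm (Ideal.Quotient.mk m (algebraMap k A r)) = r
    have : (Ideal.Quotient.mk m) (algebraMap k A r) = e r := rfl
    rw [this, RingEquiv.symm_apply_apply]
  · show e.symm (Ideal.Quotient.mk m a) = 0 ↔ a ∈ m
    rw [map_eq_zero_iff _ e.symm.injective, Ideal.Quotient.eq_zero_iff_mem]

/-- If the image of `z` under the map `A ⊗[k] K →ₐ[k] K` induced by `φ : A →ₐ[k] k`
vanishes, then `φ` kills all coordinates of `z` w.r.t. a basis of `K` over `k`. -/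
lemma aux_coeff [Field k] [CommRing A] [Algebra k A]
    [Field K] [Algebra k K] (b : Module.Basis ι k K) (φ : A →ₐ[k] k) (z : A ⊗[k] K)
    (hz : (Algebra.TensorProduct.lid k K).toAlgHom.comp
      (Algebra.TensorProduct.map φ (AlgHom.id k K)) z = 0) :
    ∀ i, φ ((b.baseChange A).repr z i) = 0 := by
  classical
  set r := (b.baseChange A).repr z with hr
  have hzr : z = ∑ i ∈ r.support, r i • (b.baseChange A) i := by
    conv_lhs => rw [← (b.baseChange A).linearCombination_repr z]
    rw [Finsupp.linearCombination_apply, Finsupp.sum, hr]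
  have hterm : ∀ i, (Algebra.TensorProduct.lid k K).toAlgHom.comp
      (Algebra.TensorProduct.map φ (AlgHom.id k K)) (r i • (b.baseChange A) i)
      = φ (r i) • b i := by
    intro i
    have h1 : r i • (b.baseChange A) i = (r i) ⊗ₜ[k] (b i) := by
      rw [Module.Basis.baseChange_apply, TensorProduct.smul_tmul', smul_eq_mul, mul_one]
    rw [h1]
    show (Algebra.TensorProduct.lid k K) (φ (r i) ⊗ₜ[k] (b i)) = φ (r i) • b i
    exact Algebra.TensorProduct.lid_tmul _ _
  have hsum : ∑ i ∈ r.support, φ (r i) • b i = 0 := by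
    rw [← hz, hzr, map_sum]
    exact Finset.sum_congr rfl fun i _ => (hterm i).symm
  intro i
  by_cases hi : i ∈ r.support
  · exact linearIndependent_iff'.mp b.linearIndependent r.support (fun j => φ (r j)) hsum i hi
  · rw [Finsupp.notMem_support_iff.mp hi, map_zero]

/-- `A ⊗[k] K` has no zero divisors when `A` is a finite type domain over an
algebraically closed field `k` and `K` is a field extension of `k`. -/
lemma aux_nzd [Field k] [IsAlgClosed k] [CommRing A] [IsDomain A]
    [Algebra k A] [Algebra.FiniteType k A] [Field K] [Algebra k K]
    (x y : A ⊗[k] K) (h : x * y = 0) : x = 0 ∨ y = 0 := by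
  classical
  let b := Module.Basis.ofVectorSpace k K
  let I : Ideal A := Ideal.span (Set.range ((b.baseChange A).repr x))
  let J : Ideal A := Ideal.span (Set.range ((b.baseChange A).repr y))
  have key : ∀ m : Ideal A, m.IsMaximal → I * J ≤ m := by
    intro m hm
    obtain ⟨φ, hφ⟩ := aux_hom (k := k) m
    set Ψ : A ⊗[k] K →ₐ[k] K := (Algebra.TensorProduct.lid k K).toAlgHom.comp
      (Algebra.TensorProduct.map φ (AlgHom.id k K)) with hΨ
    have hxy : Ψ x * Ψ y = 0 := by rw [← map_mul, h, map_zero]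
    rcases mul_eq_zero.mp hxy with h0 | h0
    · refine le_trans Ideal.mul_le_left (Ideal.span_le.mpr ?_)
      rintro a ⟨i, rfl⟩
      exact (hφ _).mp (aux_coeff b φ x h0 i)
    · refine le_trans Ideal.mul_le_right (Ideal.span_le.mpr ?_)
      rintro a ⟨i, rfl⟩
      exact (hφ _).mp (aux_coeff b φ y h0 i)
  haveI : IsJacobsonRing A := isJacobsonRing_of_finiteType (A := k)
  have hbot : (⊥ : Ideal A).jacobson = ⊥ := by
    rw [← Ideal.radical_eq_jacobson, Ideal.radical_bot_of_noZeroDivisors]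
  have hIJ : I * J = ⊥ := by
    rw [← le_bot_iff, ← hbot]
    exact le_sInf fun m hm => key m hm.2
  rcases Ideal.mul_eq_bot.mp hIJ with h0 | h0
  · left
    apply (b.baseChange A).repr.map_eq_zero_iff.mp
    ext i
    exact Ideal.span_eq_bot.mp h0 _ ⟨i, rfl⟩
  · right
    apply (b.baseChange A).repr.map_eq_zero_iff.mp
    ext i
    exact Ideal.span_eq_bot.mp h0 _ ⟨i, rfl⟩

variable [Field k] [Field E] [Field K] [Algebra k E] [Algebra k K]

lemma aux_mono {A B : Subalgebra k E} (h : A ≤ B) :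
    (Algebra.TensorProduct.map A.val (AlgHom.id k K)).range ≤
      (Algebra.TensorProduct.map B.val (AlgHom.id k K)).range := by
  rintro _ ⟨w, rfl⟩
  refine ⟨Algebra.TensorProduct.map (Subalgebra.inclusion h) (AlgHom.id k K) w, ?_⟩
  have hc : B.val.comp (Subalgebra.inclusion h) = A.val := by ext a; rfl
  calc (Algebra.TensorProduct.map B.val (AlgHom.id k K))
        ((Algebra.TensorProduct.map (Subalgebra.inclusion h) (AlgHom.id k K)) w)
      = ((Algebra.TensorProduct.map B.val (AlgHom.id k K)).comp
          (Algebra.TensorProduct.map (Subalgebra.inclusion h) (AlgHom.id k K))) w := rfl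
    _ = (Algebra.TensorProduct.map A.val (AlgHom.id k K)) w := by
        rw [← hc]
        induction w with
        | zero => rw [map_zero, map_zero]
        | tmul a b => rfl
        | add u v hu hv => rw [map_add, map_add, hu, hv]

/-- Every element of `E ⊗[k] K` comes from `A ⊗[k] K` for some finitely generated
subalgebra `A` of `E`. -/
lemma aux_exists (x : E ⊗[k] K) : ∃ A : Subalgebra k E, A.FG ∧
    x ∈ (Algebra.TensorProduct.map A.val (AlgHom.id k K)).range := by
  classical
  induction x with
  | zero => exact ⟨⊥, Subalgebra.fg_bot, zero_mem _⟩
  | tmul e b =>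
    refine ⟨Algebra.adjoin k {e}, ⟨{e}, by simp⟩,
      ⟨⟨e, Algebra.self_mem_adjoin_singleton k e⟩ ⊗ₜ[k] b, rfl⟩⟩
  | add u v hu hv =>
    obtain ⟨A, ⟨s, hs⟩, hux⟩ := hu
    obtain ⟨B, ⟨t, ht⟩, hvx⟩ := hv
    refine ⟨A ⊔ B, ⟨s ∪ t, by rw [Finset.coe_union, Algebra.adjoin_union, hs, ht]⟩, ?_⟩
    exact add_mem (aux_mono le_sup_left hux) (aux_mono le_sup_right hvx)

end Aux

set_option synthInstance.maxHeartbeats 1000000 in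
/-- If `k` is algebraically closed and `E`, `K` are field extensions of `k`,
then `E ⊗ₖ K` is an integral domain. -/
theorem stmt_8 {k E K : Type*} [Field k] [IsAlgClosed k]
    [Field E] [Field K] [Algebra k E] [Algebra k K] :
    IsDomain (E ⊗[k] K) := by
  haveI : NoZeroDivisors (E ⊗[k] K) := by
    constructor
    intro x y h
    classical
    obtain ⟨A, hA, hx⟩ := aux_exists x
    obtain ⟨B, hB, hy⟩ := aux_exists y
    obtain ⟨s, hs⟩ := hA
    obtain ⟨t, ht⟩ := hB
    have hfg : (A ⊔ B).FG := ⟨s ∪ t, by rw [Finset.coe_union, Algebra.adjoin_union, hs, ht]⟩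
    obtain ⟨x', hx'0⟩ := aux_mono (le_sup_left : A ≤ A ⊔ B) hx
    obtain ⟨y', hy'0⟩ := aux_mono (le_sup_right : B ≤ A ⊔ B) hy
    have hx' : (Algebra.TensorProduct.map (A ⊔ B).val (AlgHom.id k K)) x' = x := hx'0
    have hy' : (Algebra.TensorProduct.map (A ⊔ B).val (AlgHom.id k K)) y' = y := hy'0
    haveI : Algebra.FiniteType k (A ⊔ B : Subalgebra k E) :=
      (Subalgebra.fg_iff_finiteType _).mp hfg
    have hinj : Function.Injective (Algebra.TensorProduct.map (A ⊔ B).val (AlgHom.id k K)) :=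
      Module.Flat.rTensor_preserves_injective_linearMap
        (M := K) (A ⊔ B).val.toLinearMap Subtype.val_injective
    have h0 : x' * y' = 0 := by
      apply hinj
      rw [map_mul, hx', hy', h, map_zero]
    rcases aux_nzd x' y' h0 with h1 | h1
    · left; rw [← hx', h1, map_zero]
    · right; rw [← hy', h1, map_zero]
  exact NoZeroDivisors.to_isDomain _
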